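/- arXiv:1601.06280 — 2 statements merged into one kernel-verified Lean document; each statement's English description precedes it below -/
import Mathlib

section
/- Let U be a basis of an F_q-subspace 𝒰 ⊆ F_{q^m} and let U = A ∪ B be a partition of U into disjoint sets. Then the minimal subspace polynomial satisfies the recursion M_𝒰 = M_{⟨M_{⟨A⟩}(B)⟩} · M_{⟨A⟩}, where M_{⟨A⟩}(B) denotes the image set of B under the evaluation map of M_{⟨A⟩} and ⟨·⟩ denotes the F_q-span. -/
open Polynomial

/-- Multiplication of linearized polynomials, in the coefficient representation where the
polynomial `∑ aᵢ Xⁱ` represents the linearized polynomial `∑ aᵢ x^(qⁱ)`: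
`(a·b)ᵢ = ∑_{j≤i} aⱼ (b_{i-j})^(qʲ)`. -/
noncomputable def lmul {F : Type*} [Field F] (q : ℕ) (a b : Polynomial F) : Polynomial F :=
  ∑ i ∈ Finset.range (a.natDegree + b.natDegree + 1),
    Polynomial.C (∑ j ∈ Finset.range (i + 1), a.coeff j * (b.coeff (i - j)) ^ q ^ j) *
      Polynomial.X ^ i

/-- Evaluation of the linearized polynomial represented by `a`: `a(α) = ∑ aᵢ α^(qⁱ)`. -/
noncomputable def leval {F : Type*} [Field F] (q : ℕ) (a : Polynomial F) (α : F) : F :=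
  ∑ i ∈ Finset.range (a.natDegree + 1), a.coeff i * α ^ q ^ i

section Aux
variable {F : Type*} [Field F] (q : ℕ)

lemma lmul_coeff (a b : Polynomial F) (k : ℕ) :
    (lmul q a b).coeff k =
      if k ≤ a.natDegree + b.natDegree then
        ∑ j ∈ Finset.range (k + 1), a.coeff j * (b.coeff (k - j)) ^ q ^ j
      else 0 := by
  unfold lmul
  rw [Polynomial.finset_sum_coeff]
  simp only [Polynomial.coeff_C_mul, Polynomial.coeff_X_pow, mul_ite, mul_one, mul_zero]
  rw [Finset.sum_ite_eq (Finset.range (a.natDegree + b.natDegree + 1)) k]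
  simp [Nat.lt_succ_iff]

lemma lmul_coeff_top (hq0 : q ≠ 0) {a b : Polynomial F} (ha : a.Monic) (hb : b.Monic) :
    (lmul q a b).coeff (a.natDegree + b.natDegree) = 1 := by
  rw [lmul_coeff, if_pos le_rfl]
  rw [Finset.sum_eq_single a.natDegree]
  · simp [Nat.add_sub_cancel_left, ha.coeff_natDegree, hb.coeff_natDegree]
  · intro j hj hne
    rcases lt_or_gt_of_ne hne with h | h
    · have : b.natDegree < a.natDegree + b.natDegree - j := by omega
      rw [Polynomial.coeff_eq_zero_of_natDegree_lt this, zero_pow (pow_ne_zero _ hq0), mul_zero]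
    · rw [Polynomial.coeff_eq_zero_of_natDegree_lt h, zero_mul]
  · intro h
    exact absurd (Finset.mem_range.mpr (by omega)) h

lemma lmul_natDegree (hq0 : q ≠ 0) {a b : Polynomial F} (ha : a.Monic) (hb : b.Monic) :
    (lmul q a b).natDegree = a.natDegree + b.natDegree := by
  apply le_antisymm
  · rw [Polynomial.natDegree_le_iff_coeff_eq_zero]
    intro k hk
    rw [lmul_coeff, if_neg (by omega)]
  · exact Polynomial.le_natDegree_of_ne_zero
      (by rw [lmul_coeff_top q hq0 ha hb]; exact one_ne_zero)

lemma lmul_monic (hq0 : q ≠ 0) {a b : Polynomial F} (ha : a.Monic) (hb : b.Monic) :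
    (lmul q a b).Monic := by
  unfold Polynomial.Monic Polynomial.leadingCoeff
  rw [lmul_natDegree q hq0 ha hb, lmul_coeff_top q hq0 ha hb]

lemma leval_lmul (hq0 : q ≠ 0) {a b : Polynomial F} (ha : a.Monic) (hb : b.Monic)
    (hsum : ∀ (j : ℕ) (s : Finset ℕ) (f : ℕ → F),
      (∑ i ∈ s, f i) ^ q ^ j = ∑ i ∈ s, (f i) ^ q ^ j)
    (α : F) : _root_.leval q (lmul q a b) α = _root_.leval q a (_root_.leval q b α) := by
  classical
  set da := a.natDegree
  set db := b.natDegree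
  set D := da + db with hD
  have hmul : ∀ (j : ℕ) (x y : F), (x * y) ^ q ^ j = x ^ q ^ j * y ^ q ^ j :=
    fun j x y => mul_pow x y (q ^ j)
  -- RHS computation
  have hRHS : _root_.leval q a (_root_.leval q b α)
      = ∑ j ∈ Finset.range (da + 1), ∑ k ∈ Finset.range (db + 1),
          a.coeff j * ((b.coeff k) ^ q ^ j * α ^ q ^ (j + k)) := by
    unfold _root_.leval
    refine Finset.sum_congr rfl fun j _ => ?_
    rw [hsum j, Finset.mul_sum]
    refine Finset.sum_congr rfl fun k _ => ?_
    rw [hmul, ← pow_mul, ← pow_add]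
    ring_nf
  -- LHS computation
  have hLHS : _root_.leval q (lmul q a b) α
      = ∑ i ∈ Finset.range (D + 1), ∑ j ∈ Finset.range (i + 1),
          a.coeff j * ((b.coeff (i - j)) ^ q ^ j * α ^ q ^ i) := by
    unfold _root_.leval
    rw [lmul_natDegree q hq0 ha hb]
    refine Finset.sum_congr rfl fun i hi => ?_
    rw [lmul_coeff, if_pos (Nat.lt_succ_iff.mp (Finset.mem_range.mp hi)), Finset.sum_mul]
    refine Finset.sum_congr rfl fun j _ => ?_
    ring
  rw [hLHS, hRHS]
  -- reindex LHS triangle to filtered grid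
  have step1 : (∑ i ∈ Finset.range (D + 1), ∑ j ∈ Finset.range (i + 1),
        a.coeff j * ((b.coeff (i - j)) ^ q ^ j * α ^ q ^ i))
      = ∑ p ∈ (Finset.range (D + 1) ×ˢ Finset.range (D + 1)).filter
          (fun p => p.1 + p.2 ≤ D),
          a.coeff p.1 * ((b.coeff p.2) ^ q ^ p.1 * α ^ q ^ (p.1 + p.2)) := by
    rw [Finset.sum_sigma']
    refine Finset.sum_nbij' (fun x => (x.2, x.1 - x.2)) (fun p => ⟨p.1 + p.2, p.1⟩)
      ?_ ?_ ?_ ?_ ?_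
    · rintro ⟨i, j⟩ hx
      simp only [Finset.mem_sigma, Finset.mem_range, Nat.lt_succ_iff] at hx
      simp only [Finset.mem_filter, Finset.mem_product, Finset.mem_range, Nat.lt_succ_iff]
      omega
    · rintro ⟨j, k⟩ hp
      simp only [Finset.mem_filter, Finset.mem_product, Finset.mem_range, Nat.lt_succ_iff] at hp
      simp only [Finset.mem_sigma, Finset.mem_range, Nat.lt_succ_iff]
      omega
    · rintro ⟨i, j⟩ hx
      simp only [Finset.mem_sigma, Finset.mem_range, Nat.lt_succ_iff] at hx
      simp only
      congr 1 <;> omega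
    · rintro ⟨j, k⟩ hp
      simp only [Finset.mem_filter, Finset.mem_product, Finset.mem_range, Nat.lt_succ_iff] at hp
      simp only
      congr 1 <;> omega
    · rintro ⟨i, j⟩ hx
      simp only [Finset.mem_sigma, Finset.mem_range, Nat.lt_succ_iff] at hx
      have : j + (i - j) = i := by omega
      simp only [this]
  rw [step1]
  -- from filtered grid to full grid
  have step2 : (∑ p ∈ (Finset.range (D + 1) ×ˢ Finset.range (D + 1)).filter
          (fun p => p.1 + p.2 ≤ D),
          a.coeff p.1 * ((b.coeff p.2) ^ q ^ p.1 * α ^ q ^ (p.1 + p.2)))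
      = ∑ p ∈ Finset.range (da + 1) ×ˢ Finset.range (db + 1),
          a.coeff p.1 * ((b.coeff p.2) ^ q ^ p.1 * α ^ q ^ (p.1 + p.2)) := by
    rw [← Finset.sum_subset (s₁ := Finset.range (da + 1) ×ˢ Finset.range (db + 1))]
    · rintro ⟨j, k⟩ hp
      simp only [Finset.mem_product, Finset.mem_range, Nat.lt_succ_iff] at hp
      simp only [Finset.mem_filter, Finset.mem_product, Finset.mem_range, Nat.lt_succ_iff]
      omega
    · rintro ⟨j, k⟩ hp hnp
      simp only [Finset.mem_filter, Finset.mem_product, Finset.mem_range, Nat.lt_succ_iff] at hp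
      simp only [Finset.mem_product, Finset.mem_range, Nat.lt_succ_iff, not_and] at hnp
      rcases Nat.lt_or_ge da j with h | h
      · rw [Polynomial.coeff_eq_zero_of_natDegree_lt h, zero_mul]
      · have hk : db < k := by
          rcases Nat.lt_or_ge db k with h2 | h2
          · exact h2
          · exact absurd h2 (by intro _; exact (hnp h) (by omega))
        rw [Polynomial.coeff_eq_zero_of_natDegree_lt hk,
          zero_pow (pow_ne_zero _ hq0), zero_mul, mul_zero]
  rw [step2, Finset.sum_product]

end Aux

/-- `M` is the minimal subspace polynomial of the `Fq`-subspace `U` of `F`: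
`M` is monic, its q-degree equals `dim U`, and its root space is exactly `U`. -/
def IsMSP (Fq : Type*) {F : Type*} [Field Fq] [Field F] [Algebra Fq F] (q : ℕ)
    (U : Submodule Fq F) (M : Polynomial F) : Prop :=
  M.Monic ∧ M.natDegree = Module.finrank Fq U ∧ ∀ α : F, leval q M α = 0 ↔ α ∈ U

lemma msp_eq {Fq F : Type*} [Field Fq] [Fintype Fq] [Field F] [Fintype F] [Algebra Fq F]
    {q : ℕ} (hq : q = Fintype.card Fq) (U : Submodule Fq F) {M N : Polynomial F}
    (hM : IsMSP Fq q U M) (hN : IsMSP Fq q U N) : M = N := by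
  classical
  have hq2 : 2 ≤ q := by rw [hq]; exact Fintype.one_lt_card
  set d := Module.finrank Fq U with hd
  obtain ⟨hMmonic, hMdeg, hMroot⟩ := hM
  obtain ⟨hNmonic, hNdeg, hNroot⟩ := hN
  set f : Polynomial F := ∑ i ∈ Finset.range d, Polynomial.C (M.coeff i - N.coeff i)
      * Polynomial.X ^ (q ^ i) with hf
  have hfeval : ∀ α ∈ U, f.eval α = 0 := by
    intro α hα
    have hM0 : leval q M α = 0 := (hMroot α).mpr hα
    have hN0 : leval q N α = 0 := (hNroot α).mpr hα
    unfold _root_.leval at hM0 hN0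
    rw [hMdeg] at hM0
    rw [hNdeg] at hN0
    have key : ∑ i ∈ Finset.range (d + 1), (M.coeff i - N.coeff i) * α ^ q ^ i = 0 := by
      have := sub_eq_zero.mpr (hM0.trans hN0.symm)
      rw [← Finset.sum_sub_distrib] at this
      rw [← this]
      exact Finset.sum_congr rfl fun i _ => by ring
    rw [Finset.sum_range_succ] at key
    have htop : M.coeff d - N.coeff d = 0 := by
      have h1 : M.coeff d = 1 := by
        have := hMmonic.coeff_natDegree; rwa [hMdeg] at this
      have h2 : N.coeff d = 1 := by
        have := hNmonic.coeff_natDegree; rwa [hNdeg] at this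
      rw [h1, h2, sub_self]
    rw [htop, zero_mul, add_zero] at key
    rw [hf]
    simp only [Polynomial.eval_finset_sum, Polynomial.eval_mul, Polynomial.eval_C,
      Polynomial.eval_pow, Polynomial.eval_X]
    exact key
  have hf0 : f = 0 := by
    rcases Nat.eq_zero_or_pos d with hd0 | hdpos
    · rw [hf, hd0]; simp
    haveI : Fintype ↥U := Fintype.ofFinite _
    apply Polynomial.eq_zero_of_natDegree_lt_card_of_eval_eq_zero f
      (Subtype.val_injective (p := fun x => x ∈ U))
      (fun i => hfeval i i.2)
    have hcard : Fintype.card ↥U = q ^ d := by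
      rw [hq, hd]; exact Module.card_eq_pow_finrank
    rw [hcard]
    have hbound : f.natDegree ≤ q ^ (d - 1) := by
      rw [hf]
      apply Polynomial.natDegree_sum_le_of_forall_le
      intro i hi
      apply le_trans (Polynomial.natDegree_C_mul_le _ _)
      apply le_trans (Polynomial.natDegree_X_pow_le _)
      exact Nat.pow_le_pow_right (by omega) (by simp at hi; omega)
    calc f.natDegree ≤ q ^ (d - 1) := hbound
      _ < q ^ d := Nat.pow_lt_pow_right (by omega) (by omega)
  have hcoeff : ∀ k, M.coeff k = N.coeff k := by
    intro k
    rcases lt_trichotomy k d with hk | hk | hk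
    · have : f.coeff (q ^ k) = M.coeff k - N.coeff k := by
        rw [hf, Polynomial.finset_sum_coeff]
        simp only [Polynomial.coeff_C_mul, Polynomial.coeff_X_pow]
        rw [Finset.sum_eq_single k]
        · simp
        · intro i hi hne
          rw [if_neg, mul_zero]
          exact fun h => hne (Nat.pow_right_injective hq2 h).symm
        · intro h; exact absurd (Finset.mem_range.mpr hk) h
      rw [hf0] at this
      simp only [Polynomial.coeff_zero] at this
      exact sub_eq_zero.mp this.symm
    · rw [hk,
        show M.coeff d = 1 from by have := hMmonic.coeff_natDegree; rwa [hMdeg] at this,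
        show N.coeff d = 1 from by have := hNmonic.coeff_natDegree; rwa [hNdeg] at this]
    · rw [Polynomial.coeff_eq_zero_of_natDegree_lt (by omega : M.natDegree < k),
        Polynomial.coeff_eq_zero_of_natDegree_lt (by omega : N.natDegree < k)]
  exact Polynomial.ext hcoeff


/-- Recursion for the minimal subspace polynomial: if `U = A ∪ B` is a basis of `𝒰`
partitioned into disjoint sets `A` and `B`, then
`M_𝒰 = M_⟨M_⟨A⟩(B)⟩ · M_⟨A⟩`. -/
theorem msp_recursion
    (Fq F : Type*) [Field Fq] [Fintype Fq] [Field F] [Fintype F] [Algebra Fq F]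
    (q : ℕ) (hq : q = Fintype.card Fq)
    (A B : Set F) (hAB : Disjoint A B)
    (hli : LinearIndependent Fq (fun x : ↥(A ∪ B) => (x : F)))
    (MA MC MU : Polynomial F)
    (hMA : IsMSP Fq q (Submodule.span Fq A) MA)
    (hMC : IsMSP Fq q (Submodule.span Fq ((fun β => leval q MA β) '' B)) MC)
    (hMU : IsMSP Fq q (Submodule.span Fq (A ∪ B)) MU) :
    MU = lmul q MC MA := by
  classical
  have hq2 : 2 ≤ q := by rw [hq]; exact Fintype.one_lt_card
  have hq0 : q ≠ 0 := by omega
  haveI : CharP Fq (ringChar Fq) := ringChar.charP Fq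
  obtain ⟨nn, hpprime, hcard⟩ := FiniteField.card Fq (ringChar Fq)
  set p := ringChar Fq with hpdef
  haveI : Fact p.Prime := ⟨hpprime⟩
  haveI : CharP F p := charP_of_injective_algebraMap (algebraMap Fq F).injective p
  have hqp : ∀ j : ℕ, q ^ j = p ^ (↑nn * j) := fun j => by rw [hq, hcard, pow_mul]
  have hsum : ∀ (j : ℕ) (s : Finset ℕ) (f : ℕ → F),
      (∑ i ∈ s, f i) ^ q ^ j = ∑ i ∈ s, (f i) ^ q ^ j := by
    intro j s f; rw [hqp j]; exact sum_pow_char_pow (p := p) (n := ↑nn * j) s f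
  have hadd : ∀ (j : ℕ) (x y : F), (x + y) ^ q ^ j = x ^ q ^ j + y ^ q ^ j := by
    intro j x y; rw [hqp j]; exact add_pow_char_pow ..
  have hscalar : ∀ (c : Fq) (j : ℕ), (algebraMap Fq F c) ^ q ^ j = algebraMap Fq F c := by
    intro c j
    rw [← map_pow]
    congr 1
    rw [hq]
    exact FiniteField.pow_card_pow j c
  -- the evaluation of MA as an Fq-linear map
  let L : F →ₗ[Fq] F :=
    { toFun := fun α => leval q MA α
      map_add' := by
        intro x y
        unfold _root_.leval
        rw [← Finset.sum_add_distrib]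
        refine Finset.sum_congr rfl fun i _ => ?_
        rw [hadd i, mul_add]
      map_smul' := by
        intro c x
        unfold _root_.leval
        rw [RingHom.id_apply, Finset.smul_sum]
        refine Finset.sum_congr rfl fun i _ => ?_
        rw [Algebra.smul_def, Algebra.smul_def, mul_pow, hscalar c i]
        ring }
  have hL : ∀ α, L α = leval q MA α := fun _ => rfl
  have hker : LinearMap.ker L = Submodule.span Fq A := by
    ext x
    rw [LinearMap.mem_ker, hL]
    exact hMA.2.2 x
  set W := Submodule.span Fq ((fun β => leval q MA β) '' B) with hWdef
  -- linear independence facts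
  have hliA : LinearIndependent Fq (fun x : A => (x:F)) := (show LinearIndepOn Fq id (A ∪ B) from hli).mono Set.subset_union_left
  have hliB : LinearIndependent Fq (fun x : B => (x:F)) := (show LinearIndepOn Fq id (A ∪ B) from hli).mono Set.subset_union_right
  have hdisjBA : Disjoint (Submodule.span Fq B) (Submodule.span Fq A) := by
    have himg1 : (Subtype.val : ↥(A ∪ B) → F) '' (Subtype.val ⁻¹' B) = B := by
      rw [Subtype.image_preimage_coe]
      exact Set.inter_eq_self_of_subset_right Set.subset_union_right
    have himg2 : (Subtype.val : ↥(A ∪ B) → F) '' (Subtype.val ⁻¹' A) = A := by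
      rw [Subtype.image_preimage_coe]
      exact Set.inter_eq_self_of_subset_right Set.subset_union_left
    have := hli.disjoint_span_image (s := Subtype.val ⁻¹' B) (t := Subtype.val ⁻¹' A)
      (Disjoint.preimage _ hAB.symm)
    rwa [himg1, himg2] at this
  have hmapB : LinearIndependent Fq (fun x : B => L (x : F)) := by
    have := hliB.map (f := L) (by rw [hker, Subtype.range_coe]; exact hdisjBA)
    exact this
  have himgB : LinearIndependent Fq
      (fun x : ((fun β => leval q MA β) '' B) => (x : F)) := (show LinearIndepOn Fq L B from hmapB).id_image
  -- cardinalities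
  have hcardU : Module.finrank Fq (Submodule.span Fq (A ∪ B)) = (A ∪ B).toFinset.card :=
    finrank_span_set_eq_card hli
  have hcardA : Module.finrank Fq (Submodule.span Fq A) = A.toFinset.card :=
    finrank_span_set_eq_card hliA
  have hinj : Set.InjOn (fun β => leval q MA β) B := by
    rw [Set.injOn_iff_injective]
    exact hmapB.injective
  have hcardW : Module.finrank Fq W = B.toFinset.card := by
    rw [hWdef]
    rw [finrank_span_set_eq_card himgB, Set.toFinset_image,
      Finset.card_image_of_injOn (by rwa [Set.coe_toFinset])]
  have hunion : (A ∪ B).toFinset.card = A.toFinset.card + B.toFinset.card := by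
    rw [Set.toFinset_union]
    exact Finset.card_union_of_disjoint (by rwa [Set.disjoint_toFinset])
  -- the image of the span
  have hWmap : Submodule.map L (Submodule.span Fq (A ∪ B)) = W := by
    rw [Submodule.map_span, Set.image_union, Submodule.span_union]
    exact sup_eq_right.mpr (by
      rw [Submodule.span_le]
      rintro _ ⟨a, ha, rfl⟩
      have h0 : L a = 0 := by
        rw [← LinearMap.mem_ker, hker]
        exact Submodule.subset_span ha
      rw [h0]
      exact Submodule.zero_mem _)
  have hmem : ∀ α : F, L α ∈ W ↔ α ∈ Submodule.span Fq (A ∪ B) := by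
    intro α
    constructor
    · intro h
      rw [← hWmap] at h
      obtain ⟨β, hβ, hLβ⟩ := Submodule.mem_map.mp h
      have hsub : α - β ∈ Submodule.span Fq A := by
        rw [← hker, LinearMap.mem_ker, map_sub, hLβ, sub_self]
      have : α - β ∈ Submodule.span Fq (A ∪ B) :=
        Submodule.span_mono Set.subset_union_left hsub
      have := Submodule.add_mem _ this hβ
      rwa [sub_add_cancel] at this
    · intro h
      rw [← hWmap]
      exact Submodule.mem_map_of_mem h
  -- lmul q MC MA is an MSP for span (A ∪ B)
  have hNroot : ∀ α : F, leval q (lmul q MC MA) α = 0 ↔ α ∈ Submodule.span Fq (A ∪ B) := by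
    intro α
    rw [leval_lmul q hq0 hMC.1 hMA.1 hsum α, ← hL α, hMC.2.2 (L α)]
    exact hmem α
  have hNdeg : (lmul q MC MA).natDegree
      = Module.finrank Fq (Submodule.span Fq (A ∪ B)) := by
    rw [lmul_natDegree q hq0 hMC.1 hMA.1, hMC.2.1, hMA.2.1, hcardW, hcardA,
      hcardU, hunion]
    omega
  exact msp_eq hq _ hMU ⟨lmul_monic q hq0 hMC.1 hMA.1, hNdeg, hNroot⟩
end

section
/- The Gabidulin code Gab[n,k] over F_{q^m} with n ≤ m achieves minimum rank distance d_R = n − k + 1 (it is maximum rank distance): any nonzero codeword (f(g_1),…,f(g_n)), with f a nonzero linearized polynomial of q-degree < k, has rank weight at least n − k + 1, where the rank weight of v ∈ F_{q^m}^n is the F_q-dimension of the span of its entries. -/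
open Polynomial

/-- Gabidulin codes are MRD: any nonzero codeword `(f(g₁),…,f(g_n))`, with `f ≠ 0` of
q-degree `< k`, has rank weight (the `F_q`-dimension of the span of its entries) at
least `n - k + 1`; hence the minimum rank distance is `n - k + 1`. -/
theorem gabidulin_code_mrd
    (Fq F : Type*) [Field Fq] [Fintype Fq] [Field F] [Fintype F] [Algebra Fq F]
    (q : ℕ) (hq : q = Fintype.card Fq)
    (n k : ℕ) (hk : k ≤ n) (hn : n ≤ Module.finrank Fq F)
    (g : Fin n → F) (hg : LinearIndependent Fq g)
    (f : Polynomial F) (hf : f ≠ 0) (hfd : f.degree < (k : ℕ)) :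
    n - k + 1 ≤
      Module.finrank Fq (Submodule.span Fq (Set.range fun i : Fin n => leval q f (g i))) := by
  classical
  -- k ≥ 1
  have hk1 : 1 ≤ k := by
    by_contra h
    have hk0 : k = 0 := by omega
    subst hk0
    rw [Nat.cast_zero] at hfd
    exact absurd hfd (not_lt.mpr (Polynomial.zero_le_degree_iff.mpr hf))
  have hdlt : f.natDegree ≤ k - 1 := by
    have := (Polynomial.natDegree_lt_iff_degree_lt hf).mpr hfd
    omega
  have hq2 : 2 ≤ q := by rw [hq]; exact Fintype.one_lt_card
  -- characteristic
  set p := ringChar Fq with hp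
  obtain ⟨s, hps, hcard⟩ := FiniteField.card Fq p
  have hpp : Fact p.Prime := ⟨hps⟩
  have hcharF : CharP F p := charP_of_injective_algebraMap (algebraMap Fq F).injective p
  have hexp : ExpChar F p := ExpChar.prime hps
  have hqpow : q = p ^ (s : ℕ) := hq.trans hcard
  -- Frobenius powers are additive
  have hadd : ∀ (i : ℕ) (x y : F), (x + y) ^ q ^ i = x ^ q ^ i + y ^ q ^ i := by
    intro i x y
    rw [hqpow, ← pow_mul]
    exact add_pow_expChar_pow x y p _
  have hsmul : ∀ (i : ℕ) (c : Fq) (x : F), (c • x) ^ q ^ i = c • x ^ q ^ i := by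
    intro i c x
    rw [_root_.smul_pow]
    congr 1
    have : c ^ q ^ i = c := by rw [hq]; exact FiniteField.pow_card_pow i c
    conv_rhs => rw [← this]
  -- the linearized evaluation map as an Fq-linear map
  set φ : F →ₗ[Fq] F :=
    { toFun := leval q f
      map_add' := by
        intro x y
        unfold _root_.leval
        rw [← Finset.sum_add_distrib]
        exact Finset.sum_congr rfl fun i _ => by rw [hadd, mul_add]
      map_smul' := by
        intro c x
        show leval q f (c • x) = c • leval q f x
        unfold _root_.leval
        rw [Finset.smul_sum]
        exact Finset.sum_congr rfl fun i _ => by rw [hsmul, mul_smul_comm] } with hφ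
  set W : Submodule Fq F := Submodule.span Fq (Set.range g) with hW
  have hWrank : Module.finrank Fq W = n := by
    rw [finrank_span_eq_card hg, Fintype.card_fin]
  -- the code span is the image of W
  have himg : Submodule.span Fq (Set.range fun i : Fin n => leval q f (g i)) = W.map φ := by
    rw [hW, Submodule.map_span, ← Set.range_comp]
    rfl
  -- polynomial whose roots contain the kernel
  set P : Polynomial F := ∑ i ∈ Finset.range (f.natDegree + 1), C (f.coeff i) * X ^ q ^ i with hP
  have hPeval : ∀ α : F, P.eval α = leval q f α := by
    intro α
    rw [hP, eval_finset_sum]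
    exact Finset.sum_congr rfl fun i _ => by rw [eval_mul, eval_C, eval_pow, eval_X]
  have hP0 : P ≠ 0 := by
    intro h
    have : P.coeff (q ^ f.natDegree) = f.coeff f.natDegree := by
      rw [hP, Polynomial.finset_sum_coeff]
      rw [Finset.sum_eq_single f.natDegree]
      · simp
      · intro i hi hne
        rw [coeff_C_mul, coeff_X_pow, if_neg (fun hc => hne (Nat.pow_right_injective hq2 hc).symm), mul_zero]
      · intro hmem; exact absurd (Finset.self_mem_range_succ _) hmem
    rw [h, Polynomial.coeff_zero] at this
    exact hf (Polynomial.leadingCoeff_eq_zero.mp this.symm)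
  have hPdeg : P.natDegree ≤ q ^ (k - 1) := by
    apply Polynomial.natDegree_sum_le_of_forall_le
    intro i hi
    apply le_trans (Polynomial.natDegree_C_mul_le _ _)
    rw [Polynomial.natDegree_X_pow]
    exact Nat.pow_le_pow_right (by omega) (by
      have := Finset.mem_range.mp hi; omega)
  -- kernel bound
  set φ' := φ.domRestrict W with hφ'
  have hker : Module.finrank Fq (LinearMap.ker φ') ≤ k - 1 := by
    have hcardker : Fintype.card (LinearMap.ker φ') ≤ q ^ (k - 1) := by
      have hinj : Function.Injective
          (fun x : LinearMap.ker φ' => (((x : W) : F) : F)) := by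
        intro a b hab
        ext
        exact hab
      have hmem : ∀ x : LinearMap.ker φ', ((x : W) : F) ∈ P.roots.toFinset := by
        intro x
        rw [Multiset.mem_toFinset, Polynomial.mem_roots hP0]
        show P.eval _ = 0
        rw [hPeval]
        exact x.2
      calc Fintype.card (LinearMap.ker φ')
          ≤ P.roots.toFinset.card := by
            rw [← Fintype.card_coe]
            apply Fintype.card_le_of_injective
              (fun x : LinearMap.ker φ' => (⟨((x : W) : F), hmem x⟩ : P.roots.toFinset))
            intro a b hab
            apply hinj
            simpa using congrArg Subtype.val hab
        _ ≤ P.natDegree := le_trans (Multiset.toFinset_card_le _) (Polynomial.card_roots' P)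
        _ ≤ q ^ (k - 1) := hPdeg
    have hcardeq : Fintype.card (LinearMap.ker φ') = q ^ Module.finrank Fq (LinearMap.ker φ') := by
      rw [hq]; exact Module.card_eq_pow_finrank (K := Fq) (V := LinearMap.ker φ')
    rw [hcardeq] at hcardker
    exact (Nat.pow_le_pow_iff_right (by omega)).mp hcardker
  -- rank-nullity
  have hrn := LinearMap.finrank_range_add_finrank_ker φ'
  have hrange : LinearMap.range φ' = W.map φ := LinearMap.range_domRestrict W φ
  rw [himg, ← hrange]
  have : Module.finrank Fq W = n := hWrank
  omega
end
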